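/- Under hypotheses (ρ), (A1), (A4), and the first part of (A5) (namely, for every t ∈ ℤ[1,T], lim_{|x₁|+|x₂|→∞} F(t,x₁,x₂)/(|x₁|^l + |x₂|^l) = +∞, with F continuous in (x₁,x₂)), the functionals I(u) = ∑_{t=1}^T [ρ₁(t)Φ₁(Δu₁(t)) + ρ₂(t)Φ₂(Δu₂(t)) + ρ₃(t)Φ₃(u₁(t)) + ρ₄(t)Φ₄(u₂(t))] and Ψ(u) = −∑_{t=1}^T F(t,u₁(t),u₂(t)) satisfy lim_{‖u‖→∞} Ψ(u)/I(u) = −∞; that is, for every M > 0 there exists R > 0 such that for all u ∈ E with ‖u‖ ≥ R we have I(u) > 0 and Ψ(u)/I(u) ≤ −M. -/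

import Mathlib

/- STATEMENT 11: under (ρ), (A1), (A4) and the coercivity part of (A5),
`Ψ(u)/I(u) → −∞` as `‖u‖ → ∞` on `E`: for every `M > 0` there is `R > 0` such that
`‖u‖ ≥ R` implies `I(u) > 0` and `Ψ(u)/I(u) ≤ −M`. -/

noncomputable section

abbrev Rn (N : ℕ) := EuclideanSpace ℝ (Fin N)

/-- `u : ℤ → ℝ^N` is `T`-periodic. -/
def IsPeriodic (N : ℕ) (T : ℕ) (u : ℤ → Rn N) : Prop := ∀ t : ℤ, u (t + T) = u t

/-- Forward difference. -/
def fdiff (N : ℕ) (u : ℤ → Rn N) (t : ℤ) : Rn N := u (t + 1) - u t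

/-- The norm `‖·‖_{E_T}`. -/
def normET (N T : ℕ) (θ : ℝ) (u : ℤ → Rn N) : ℝ :=
  (∑ t ∈ Finset.Icc (1 : ℤ) (T : ℤ), ‖fdiff N u t‖ ^ θ +
    ∑ t ∈ Finset.Icc (1 : ℤ) (T : ℤ), ‖u t‖ ^ θ) ^ (1 / θ)

/-- The norm `‖u‖ = ‖u₁‖_{E_T} + ‖u₂‖_{E_T}` on `E`. -/
def normE (N T : ℕ) (θ : ℝ) (u : (ℤ → Rn N) × (ℤ → Rn N)) : ℝ :=
  normET N T θ u.1 + normET N T θ u.2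

/-- The functional `I`. -/
def Ifun (N T : ℕ) (ρ : Fin 4 → ℤ → ℝ) (Φv : Fin 4 → Rn N → ℝ)
    (u : (ℤ → Rn N) × (ℤ → Rn N)) : ℝ :=
  ∑ t ∈ Finset.Icc (1 : ℤ) (T : ℤ),
    (ρ 0 t * Φv 0 (fdiff N u.1 t) + ρ 1 t * Φv 1 (fdiff N u.2 t)
      + ρ 2 t * Φv 2 (u.1 t) + ρ 3 t * Φv 3 (u.2 t))

/-- The functional `Ψ(u) = −∑_{t=1}^T F(t,u₁(t),u₂(t))`. -/
def PsiFun (N T : ℕ) (F : ℤ → Rn N → Rn N → ℝ) (u : (ℤ → Rn N) × (ℤ → Rn N)) : ℝ :=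
  -∑ t ∈ Finset.Icc (1 : ℤ) (T : ℤ), F t (u.1 t) (u.2 t)

lemma sum_shift (T : ℤ) (hT : 1 ≤ T) (f : ℤ → ℝ) (hf : f (T + 1) = f 1) :
    ∑ t ∈ Finset.Icc 1 T, f (t + 1) = ∑ t ∈ Finset.Icc 1 T, f t := by
  have h1 : ∑ t ∈ Finset.Icc (1:ℤ) T, f (t+1) = ∑ t ∈ Finset.Icc (2:ℤ) (T+1), f t := by
    rw [show Finset.Icc (2:ℤ) (T+1) = Finset.map (addRightEmbedding 1) (Finset.Icc 1 T) by
      rw [Finset.map_add_right_Icc]; norm_num]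
    rw [Finset.sum_map]
    rfl
  have h2 : Finset.Icc (2:ℤ) (T+1) = insert (T+1) (Finset.Icc 2 T) := by
    ext x; simp only [Finset.mem_Icc, Finset.mem_insert]; omega
  have h3 : Finset.Icc (1:ℤ) T = insert 1 (Finset.Icc 2 T) := by
    ext x; simp only [Finset.mem_Icc, Finset.mem_insert]; omega
  rw [h1, h2, h3, Finset.sum_insert (by simp), Finset.sum_insert (by simp), hf]

lemma rpow_add_le {a b p : ℝ} (ha : 0 ≤ a) (hb : 0 ≤ b) (hp : 0 ≤ p) :
    (a + b) ^ p ≤ 2 ^ p * (a ^ p + b ^ p) := by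
  have h1 : a + b ≤ 2 * max a b := by rcases max_cases a b with ⟨h,_⟩|⟨h,_⟩ <;> nlinarith [le_max_left a b, le_max_right a b]
  have h2 : (a+b)^p ≤ (2 * max a b)^p :=
    Real.rpow_le_rpow (by linarith) h1 hp
  rw [Real.mul_rpow (by norm_num) (le_max_of_le_left ha)] at h2
  refine h2.trans ?_
  have : (max a b) ^ p ≤ a ^ p + b ^ p := by
    rcases max_cases a b with ⟨h,_⟩|⟨h,_⟩ <;> rw [h] <;>
      [nlinarith [Real.rpow_nonneg hb p]; nlinarith [Real.rpow_nonneg ha p]]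
  nlinarith [Real.rpow_nonneg (show (0:ℝ) ≤ 2 by norm_num) p]

lemma Phi_pos {N : ℕ} {Φ : Rn N → ℝ} (hconv : StrictConvexOn ℝ Set.univ Φ) (h0 : Φ 0 = 0)
    (hnn : ∀ x, 0 ≤ Φ x) {x : Rn N} (hx : x ≠ 0) : 0 < Φ x := by
  rcases lt_or_eq_of_le (hnn x) with h | h
  · exact h
  · exfalso
    have := hconv.2 (Set.mem_univ x) (Set.mem_univ 0) hx (by norm_num : (0:ℝ) < 1/2)
      (by norm_num : (0:ℝ) < 1/2) (by norm_num)
    rw [h0, ← h] at this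
    simp at this
    exact absurd (hnn _) (not_le.mpr (by linarith [this]))

lemma F_lower {N : ℕ} (l : ℝ) (hl : 0 < l) (G : Rn N × Rn N → ℝ) (hG : Continuous G)
    (M' : ℝ) (hM' : 0 ≤ M') (R₀ : ℝ)
    (hR : ∀ x₁ x₂ : Rn N, R₀ ≤ ‖x₁‖ + ‖x₂‖ → M' ≤ G (x₁, x₂) / (‖x₁‖ ^ l + ‖x₂‖ ^ l)) :
    ∃ C, 0 ≤ C ∧ ∀ x₁ x₂ : Rn N, M' * (‖x₁‖ ^ l + ‖x₂‖ ^ l) - C ≤ G (x₁, x₂) := by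
  set r := max R₀ 1 with hr
  have hr1 : (1:ℝ) ≤ r := le_max_right _ _
  have hr0 : (0:ℝ) ≤ r := by linarith
  set K : Set (Rn N × Rn N) := Metric.closedBall 0 r ×ˢ Metric.closedBall 0 r with hK
  have hKc : IsCompact K := (isCompact_closedBall _ _).prod (isCompact_closedBall _ _)
  have hKne : K.Nonempty := ⟨(0,0), by simp [hK, hr0]⟩
  obtain ⟨p, hpK, hpmin'⟩ := hKc.exists_isMinOn hKne hG.continuousOn
  have hpmin : ∀ q ∈ K, G p ≤ G q := fun q hq => hpmin' hq
  refine ⟨max (M' * (r ^ l + r ^ l) - G p) 0, le_max_right _ _, ?_⟩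
  intro x₁ x₂
  by_cases hbig : r ≤ ‖x₁‖ + ‖x₂‖
  · have hD : 0 < ‖x₁‖ ^ l + ‖x₂‖ ^ l := by
      rcases (by by_contra h; push_neg at h; nlinarith [norm_nonneg x₁, norm_nonneg x₂] :
        0 < ‖x₁‖ ∨ 0 < ‖x₂‖) with h | h
      · have := Real.rpow_pos_of_pos h l
        nlinarith [Real.rpow_nonneg (norm_nonneg x₂) l]
      · have := Real.rpow_pos_of_pos h l
        nlinarith [Real.rpow_nonneg (norm_nonneg x₁) l]
    have := hR x₁ x₂ (le_trans (le_max_left _ _) hbig)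
    rw [le_div_iff₀ hD] at this
    have h2 : M' * (‖x₁‖ ^ l + ‖x₂‖ ^ l) ≤ G (x₁, x₂) := by linarith [this]
    linarith [le_max_right (M' * (r ^ l + r ^ l) - G p) 0]
  · push_neg at hbig
    have hx1 : ‖x₁‖ ≤ r := by linarith [norm_nonneg x₂]
    have hx2 : ‖x₂‖ ≤ r := by linarith [norm_nonneg x₁]
    have hmem : (x₁, x₂) ∈ K := by
      simp [hK, Metric.mem_closedBall, dist_zero_right, hx1, hx2]
    have h1 : ‖x₁‖ ^ l ≤ r ^ l := Real.rpow_le_rpow (norm_nonneg _) hx1 hl.le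
    have h2 : ‖x₂‖ ^ l ≤ r ^ l := Real.rpow_le_rpow (norm_nonneg _) hx2 hl.le
    have h3 : G p ≤ G (x₁, x₂) := hpmin _ hmem
    have h4 : M' * (‖x₁‖ ^ l + ‖x₂‖ ^ l) ≤ M' * (r ^ l + r ^ l) := by nlinarith
    linarith [le_max_left (M' * (r ^ l + r ^ l) - G p) 0]

set_option maxHeartbeats 2000000 in
theorem psi_div_I_tendsto_neg_infty (T N : ℕ) (hT : 1 < T)
    (ρ : Fin 4 → ℤ → ℝ) (φv : Fin 4 → Rn N → Rn N) (Φv : Fin 4 → Rn N → ℝ)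
    (F : ℤ → Rn N → Rn N → ℝ)
    (θ l : ℝ) (d m : Fin 4 → ℝ)
    (hθ : 1 < θ) (hl : θ ≤ l) (hd : ∀ i, 0 < d i) (hm : ∀ i, 0 < m i)
    -- hypothesis (ρ)
    (hρper : ∀ i, ∀ t : ℤ, ρ i (t + T) = ρ i t)
    (hρpos : ∀ i, ∀ t ∈ Finset.Icc (1 : ℤ) (T : ℤ), 0 < ρ i t)
    -- hypothesis (A1)
    (hφhomeo : ∀ i, IsHomeomorph (φv i))
    (hφzero : ∀ i, φv i 0 = 0)
    (hφgrad : ∀ i, ∀ x : Rn N, φv i x = gradient (Φv i) x)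
    (hΦC1 : ∀ i, ContDiff ℝ 1 (Φv i))
    (hΦnonneg : ∀ i, ∀ x : Rn N, 0 ≤ Φv i x)
    (hΦconv : ∀ i, StrictConvexOn ℝ Set.univ (Φv i))
    (hΦzero : ∀ i, Φv i 0 = 0)
    -- hypothesis (A4)
    (hA4coer : ∀ i, ∀ M : ℝ, ∃ R : ℝ, ∀ x : Rn N, R ≤ ‖x‖ → M ≤ Φv i x)
    (hA4bnd : ∀ i, ∀ x : Rn N, Φv i x ≤ d i * ‖x‖ ^ l + m i)
    -- `F`: `T`-periodic in `t`, continuous, and superlinear of order `l` (first part of (A5))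
    (hFper : ∀ (t : ℤ) (x₁ x₂ : Rn N), F (t + T) x₁ x₂ = F t x₁ x₂)
    (hFcont : ∀ t : ℤ, Continuous (fun p : Rn N × Rn N => F t p.1 p.2))
    (hFcoer : ∀ t ∈ Finset.Icc (1 : ℤ) (T : ℤ), ∀ M : ℝ, ∃ R : ℝ,
      ∀ x₁ x₂ : Rn N, R ≤ ‖x₁‖ + ‖x₂‖ →
        M ≤ F t x₁ x₂ / (‖x₁‖ ^ l + ‖x₂‖ ^ l)) :
    ∀ M : ℝ, 0 < M → ∃ R : ℝ, 0 < R ∧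
      ∀ u : (ℤ → Rn N) × (ℤ → Rn N), IsPeriodic N T u.1 → IsPeriodic N T u.2 →
        R ≤ normE N T θ u →
          0 < Ifun N T ρ Φv u ∧ PsiFun N T F u / Ifun N T ρ Φv u ≤ -M := by
  intro M hM
  set S := Finset.Icc (1 : ℤ) (T : ℤ) with hSdef
  have hTz : (1:ℤ) ≤ (T:ℤ) := by exact_mod_cast hT.le
  have h1S : (1:ℤ) ∈ S := by simp [hSdef, hTz]
  have hθ0 : (0:ℝ) < θ := by linarith
  have hθne : θ ≠ 0 := ne_of_gt hθ0
  have hl0 : (0:ℝ) < l := by linarith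
  have hcard : ((S.card : ℝ)) = T := by rw [hSdef, Int.card_Icc]; simp
  -- bound on ρ
  set P := ∑ i : Fin 4, ∑ t ∈ S, ρ i t with hPdef
  have hρP : ∀ i, ∀ t ∈ S, ρ i t ≤ P := by
    intro i t ht
    calc ρ i t ≤ ∑ s ∈ S, ρ i s :=
          Finset.single_le_sum (fun s hs => (hρpos i s hs).le) ht
      _ ≤ P := Finset.single_le_sum
          (fun j _ => Finset.sum_nonneg fun s hs => (hρpos j s hs).le) (Finset.mem_univ i)
  have hP0 : 0 < P := lt_of_lt_of_le (hρpos 0 1 h1S) (hρP 0 1 h1S)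
  -- constants
  set Dc := d 0 + d 1 + d 2 + d 3 with hDcdef
  have hdD : ∀ i : Fin 4, d i ≤ Dc := by
    have h0 := hd 0; have h1 := hd 1; have h2 := hd 2; have h3 := hd 3
    intro i
    fin_cases i
    · show d 0 ≤ Dc; rw [hDcdef]; linarith
    · show d 1 ≤ Dc; rw [hDcdef]; linarith
    · show d 2 ≤ Dc; rw [hDcdef]; linarith
    · show d 3 ≤ Dc; rw [hDcdef]; linarith
  have hDc0 : 0 < Dc := by have := hd 0; have := hd 1; have := hd 2; have := hd 3; simp only [hDcdef]; linarith
  set mc := m 0 + m 1 + m 2 + m 3 with hmcdef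
  have hmc0 : 0 < mc := by have := hm 0; have := hm 1; have := hm 2; have := hm 3; simp only [hmcdef]; linarith
  have h2l : (2:ℝ) ^ (l+1) = 2 ^ l * 2 := by
    rw [Real.rpow_add (by norm_num : (0:ℝ) < 2), Real.rpow_one]
  have h2l0 : (0:ℝ) < 2 ^ l := Real.rpow_pos_of_pos (by norm_num) l
  have h2θ : (2:ℝ) ^ (θ+1) = 2 ^ θ * 2 := by
    rw [Real.rpow_add (by norm_num : (0:ℝ) < 2), Real.rpow_one]
  have h2θ0 : (0:ℝ) < 2 ^ θ := Real.rpow_pos_of_pos (by norm_num) θ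
  set C1 := P * Dc * ((2:ℝ) ^ (l+1) + 1) with hC1def
  have hC10 : 0 < C1 := by
    apply mul_pos (mul_pos hP0 hDc0); rw [h2l]; nlinarith
  set C2 := P * (T:ℝ) * mc with hC2def
  have hC20 : 0 < C2 := by
    apply mul_pos (mul_pos hP0 _) hmc0
    exact_mod_cast Nat.zero_lt_of_lt hT
  set M' := M * C1 + 1 with hM'def
  have hM'0 : 0 < M' := by nlinarith [mul_pos hM hC10]
  -- per-t lower bounds for F
  have hkey : ∀ t : ℤ, ∃ C, 0 ≤ C ∧ (t ∈ S →
      ∀ x₁ x₂ : Rn N, M' * (‖x₁‖ ^ l + ‖x₂‖ ^ l) - C ≤ F t x₁ x₂) := by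
    intro t
    by_cases ht : t ∈ S
    · obtain ⟨R₀, hR₀⟩ := hFcoer t ht M'
      obtain ⟨C, hC0, hC⟩ := F_lower l hl0 (fun p : Rn N × Rn N => F t p.1 p.2)
        (hFcont t) M' hM'0.le R₀ (fun x₁ x₂ h => hR₀ x₁ x₂ h)
      exact ⟨C, hC0, fun _ => hC⟩
    · exact ⟨0, le_refl _, fun h => absurd h ht⟩
  choose cf hcf0 hcfF using hkey
  set C := ∑ t ∈ S, cf t with hCdef
  have hC0 : 0 ≤ C := Finset.sum_nonneg fun t _ => hcf0 t
  -- definition of R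
  set K2 := (2:ℝ) ^ (θ+1) + 1 with hK2def
  have hK20 : 0 < K2 := by rw [hK2def, h2θ]; nlinarith
  set cc := 2 * K2 ^ (1/θ) with hccdef
  have hcc0 : 0 < cc := by
    apply mul_pos (by norm_num) (Real.rpow_pos_of_pos hK20 _)
  set X := 2 * (T:ℝ) + max (C + M * C2) 1 + 1 with hXdef
  have hX0 : 0 < X := by
    have h1 : (1:ℝ) ≤ max (C + M * C2) 1 := le_max_right _ _
    have h2 : (0:ℝ) ≤ (T:ℝ) := Nat.cast_nonneg T
    rw [hXdef]; linarith
  refine ⟨cc * X ^ (1/θ), mul_pos hcc0 (Real.rpow_pos_of_pos hX0 _), ?_⟩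
  intro u hu1 hu2 hRu
  -- basic sums
  set B1 := ∑ t ∈ S, ‖u.1 t‖ ^ θ with hB1def
  set B2 := ∑ t ∈ S, ‖u.2 t‖ ^ θ with hB2def
  set S1 := ∑ t ∈ S, ‖u.1 t‖ ^ l with hS1def
  set S2 := ∑ t ∈ S, ‖u.2 t‖ ^ l with hS2def
  have hB1nn : 0 ≤ B1 := Finset.sum_nonneg fun t _ => Real.rpow_nonneg (norm_nonneg _) _
  have hB2nn : 0 ≤ B2 := Finset.sum_nonneg fun t _ => Real.rpow_nonneg (norm_nonneg _) _
  have hS1nn : 0 ≤ S1 := Finset.sum_nonneg fun t _ => Real.rpow_nonneg (norm_nonneg _) _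
  have hS2nn : 0 ≤ S2 := Finset.sum_nonneg fun t _ => Real.rpow_nonneg (norm_nonneg _) _
  -- shift identities
  have hperfn : ∀ (v : ℤ → Rn N), IsPeriodic N T v → ∀ p : ℝ, (fun t => ‖v t‖ ^ p) ((T:ℤ) + 1) = (fun t => ‖v t‖ ^ p) 1 := by
    intro v hv p
    simp only
    rw [show ((T:ℤ)+1) = 1 + (T:ℤ) by ring, hv 1]
  have hshift1θ : ∑ t ∈ S, ‖u.1 (t+1)‖ ^ θ = ∑ t ∈ S, ‖u.1 t‖ ^ θ :=
    sum_shift _ hTz (fun t => ‖u.1 t‖ ^ θ) (hperfn u.1 hu1 θ)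
  have hshift2θ : ∑ t ∈ S, ‖u.2 (t+1)‖ ^ θ = ∑ t ∈ S, ‖u.2 t‖ ^ θ :=
    sum_shift _ hTz (fun t => ‖u.2 t‖ ^ θ) (hperfn u.2 hu2 θ)
  have hshift1l : ∑ t ∈ S, ‖u.1 (t+1)‖ ^ l = ∑ t ∈ S, ‖u.1 t‖ ^ l :=
    sum_shift _ hTz (fun t => ‖u.1 t‖ ^ l) (hperfn u.1 hu1 l)
  have hshift2l : ∑ t ∈ S, ‖u.2 (t+1)‖ ^ l = ∑ t ∈ S, ‖u.2 t‖ ^ l :=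
    sum_shift _ hTz (fun t => ‖u.2 t‖ ^ l) (hperfn u.2 hu2 l)
  -- difference sums bounded
  have hdiffsum : ∀ (v : ℤ → Rn N) (p : ℝ), 0 < p →
      (∑ t ∈ S, ‖v (t+1)‖ ^ p = ∑ t ∈ S, ‖v t‖ ^ p) →
      ∑ t ∈ S, ‖fdiff N v t‖ ^ p ≤ (2:ℝ) ^ p * ((∑ t ∈ S, ‖v t‖ ^ p) + (∑ t ∈ S, ‖v t‖ ^ p)) := by
    intro v p hp hsh
    calc ∑ t ∈ S, ‖fdiff N v t‖ ^ p
        ≤ ∑ t ∈ S, (2:ℝ) ^ p * (‖v (t+1)‖ ^ p + ‖v t‖ ^ p) := by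
          apply Finset.sum_le_sum; intro t _
          have h1 : ‖fdiff N v t‖ ≤ ‖v (t+1)‖ + ‖v t‖ := norm_sub_le _ _
          exact (Real.rpow_le_rpow (norm_nonneg _) h1 hp.le).trans
            (rpow_add_le (norm_nonneg _) (norm_nonneg _) hp.le)
      _ = (2:ℝ) ^ p * ((∑ t ∈ S, ‖v (t+1)‖ ^ p) + (∑ t ∈ S, ‖v t‖ ^ p)) := by
          rw [← Finset.mul_sum, Finset.sum_add_distrib]
      _ = _ := by rw [hsh]
  have hA1 : ∑ t ∈ S, ‖fdiff N u.1 t‖ ^ θ ≤ (2:ℝ) ^ θ * (B1 + B1) :=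
    hdiffsum u.1 θ hθ0 (by rw [hshift1θ])
  have hA2 : ∑ t ∈ S, ‖fdiff N u.2 t‖ ^ θ ≤ (2:ℝ) ^ θ * (B2 + B2) :=
    hdiffsum u.2 θ hθ0 (by rw [hshift2θ])
  have hA1l : ∑ t ∈ S, ‖fdiff N u.1 t‖ ^ l ≤ (2:ℝ) ^ l * (S1 + S1) :=
    hdiffsum u.1 l hl0 (by rw [hshift1l])
  have hA2l : ∑ t ∈ S, ‖fdiff N u.2 t‖ ^ l ≤ (2:ℝ) ^ l * (S2 + S2) :=
    hdiffsum u.2 l hl0 (by rw [hshift2l])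
  -- normE bound
  have hA1nn : 0 ≤ ∑ t ∈ S, ‖fdiff N u.1 t‖ ^ θ :=
    Finset.sum_nonneg fun t _ => Real.rpow_nonneg (norm_nonneg _) _
  have hA2nn : 0 ≤ ∑ t ∈ S, ‖fdiff N u.2 t‖ ^ θ :=
    Finset.sum_nonneg fun t _ => Real.rpow_nonneg (norm_nonneg _) _
  have hnormle : normE N T θ u ≤ cc * (B1 + B2) ^ (1/θ) := by
    have hB12 : 0 ≤ B1 + B2 := by linarith
    have hone : ∀ (Bj Aj : ℝ), 0 ≤ Bj → 0 ≤ Aj → Aj ≤ (2:ℝ)^θ * (Bj + Bj) → Bj ≤ B1 + B2 →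
        (Aj + Bj) ^ (1/θ) ≤ K2 ^ (1/θ) * (B1 + B2) ^ (1/θ) := by
      intro Bj Aj hBj hAj hAB hBle
      have h1 : Aj + Bj ≤ K2 * (B1 + B2) := by
        have hmul := mul_le_mul_of_nonneg_left hBle h2θ0.le
        rw [hK2def, h2θ]; linarith only [hAB, hBj, hBle, hB12, hmul]
      calc (Aj + Bj) ^ (1/θ) ≤ (K2 * (B1 + B2)) ^ (1/θ) :=
            Real.rpow_le_rpow (by linarith) h1 (by positivity)
        _ = K2 ^ (1/θ) * (B1 + B2) ^ (1/θ) := Real.mul_rpow hK20.le hB12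
    have hn1 := hone B1 _ hB1nn hA1nn hA1 (by linarith)
    have hn2 := hone B2 _ hB2nn hA2nn hA2 (by linarith)
    rw [normE, normET, normET]
    rw [hccdef]
    linarith [hn1, hn2]
  -- X ≤ B1 + B2
  have hXB : X ≤ B1 + B2 := by
    have hstep : X ^ (1/θ) ≤ (B1 + B2) ^ (1/θ) := by
      have h1 : cc * X ^ (1/θ) ≤ cc * (B1 + B2) ^ (1/θ) := le_trans hRu hnormle
      exact le_of_mul_le_mul_left h1 hcc0
    have h := Real.rpow_le_rpow (Real.rpow_nonneg hX0.le _) hstep hθ0.le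
    rwa [one_div, Real.rpow_inv_rpow hX0.le hθne, Real.rpow_inv_rpow (by linarith) hθne] at h
  -- S1 + S2 ≥ B1 + B2 - 2T
  have hθlpt : ∀ x : Rn N, ‖x‖ ^ θ ≤ ‖x‖ ^ l + 1 := by
    intro x
    rcases le_or_gt 1 ‖x‖ with h | h
    · have := Real.rpow_le_rpow_of_exponent_le h hl
      linarith
    · have h1 : ‖x‖ ^ θ ≤ 1 := Real.rpow_le_one (norm_nonneg _) h.le hθ0.le
      have h2 : 0 ≤ ‖x‖ ^ l := Real.rpow_nonneg (norm_nonneg _) _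
      linarith
  have hBS : B1 + B2 ≤ S1 + S2 + 2 * T := by
    have h1 : B1 ≤ S1 + T := by
      calc B1 ≤ ∑ t ∈ S, (‖u.1 t‖ ^ l + 1) := Finset.sum_le_sum fun t _ => hθlpt _
        _ = S1 + T := by rw [Finset.sum_add_distrib, Finset.sum_const, nsmul_eq_mul, mul_one, hcard]
    have h2 : B2 ≤ S2 + T := by
      calc B2 ≤ ∑ t ∈ S, (‖u.2 t‖ ^ l + 1) := Finset.sum_le_sum fun t _ => hθlpt _
        _ = S2 + T := by rw [Finset.sum_add_distrib, Finset.sum_const, nsmul_eq_mul, mul_one, hcard]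
    linarith
  have hSLge : max (C + M * C2) 1 + 1 ≤ S1 + S2 := by
    rw [hXdef] at hXB; linarith
  have hSL1 : (1:ℝ) ≤ S1 + S2 := by
    have := le_max_right (C + M * C2) 1; linarith
  -- I upper bound
  have hI_le : Ifun N T ρ Φv u ≤ C1 * (S1 + S2) + C2 := by
    have hterm : ∀ t ∈ S,
        ρ 0 t * Φv 0 (fdiff N u.1 t) + ρ 1 t * Φv 1 (fdiff N u.2 t)
          + ρ 2 t * Φv 2 (u.1 t) + ρ 3 t * Φv 3 (u.2 t)
        ≤ P * (Dc * (‖fdiff N u.1 t‖ ^ l + ‖fdiff N u.2 t‖ ^ l + ‖u.1 t‖ ^ l + ‖u.2 t‖ ^ l) + mc) := by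
      intro t ht
      have g : ∀ (i : Fin 4) (x : Rn N), ρ i t * Φv i x ≤ P * (Dc * ‖x‖ ^ l + m i) := by
        intro i x
        have h1 : ρ i t * Φv i x ≤ P * Φv i x :=
          mul_le_mul_of_nonneg_right (hρP i t ht) (hΦnonneg i x)
        have h2 : Φv i x ≤ Dc * ‖x‖ ^ l + m i := by
          have hb := hA4bnd i x
          have hdd := mul_le_mul_of_nonneg_right (hdD i) (Real.rpow_nonneg (norm_nonneg x) l)
          linarith only [hb, hdd]
        calc ρ i t * Φv i x ≤ P * Φv i x := h1
          _ ≤ P * (Dc * ‖x‖ ^ l + m i) := mul_le_mul_of_nonneg_left h2 hP0.le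
      have g0 := g 0 (fdiff N u.1 t)
      have g1 := g 1 (fdiff N u.2 t)
      have g2 := g 2 (u.1 t)
      have g3 := g 3 (u.2 t)
      have hmc' : P * (Dc * ‖fdiff N u.1 t‖ ^ l + m 0) + P * (Dc * ‖fdiff N u.2 t‖ ^ l + m 1)
          + P * (Dc * ‖u.1 t‖ ^ l + m 2) + P * (Dc * ‖u.2 t‖ ^ l + m 3)
          = P * (Dc * (‖fdiff N u.1 t‖ ^ l + ‖fdiff N u.2 t‖ ^ l + ‖u.1 t‖ ^ l + ‖u.2 t‖ ^ l) + mc) := by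
        rw [hmcdef]; ring
      linarith only [g0, g1, g2, g3, hmc']
    calc Ifun N T ρ Φv u
        ≤ ∑ t ∈ S, P * (Dc * (‖fdiff N u.1 t‖ ^ l + ‖fdiff N u.2 t‖ ^ l + ‖u.1 t‖ ^ l + ‖u.2 t‖ ^ l) + mc) :=
          Finset.sum_le_sum hterm
      _ = P * Dc * ((∑ t ∈ S, ‖fdiff N u.1 t‖ ^ l) + (∑ t ∈ S, ‖fdiff N u.2 t‖ ^ l) + S1 + S2)
          + P * (T:ℝ) * mc := by
          have hsplit : ∀ t ∈ S, P * (Dc * (‖fdiff N u.1 t‖ ^ l + ‖fdiff N u.2 t‖ ^ l + ‖u.1 t‖ ^ l + ‖u.2 t‖ ^ l) + mc)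
              = P * Dc * ‖fdiff N u.1 t‖ ^ l + P * Dc * ‖fdiff N u.2 t‖ ^ l
                + P * Dc * ‖u.1 t‖ ^ l + P * Dc * ‖u.2 t‖ ^ l + P * mc := fun t _ => by ring
          rw [Finset.sum_congr rfl hsplit]
          rw [Finset.sum_add_distrib, Finset.sum_add_distrib, Finset.sum_add_distrib,
            Finset.sum_add_distrib]
          rw [Finset.sum_const, nsmul_eq_mul, hcard]
          rw [← Finset.mul_sum, ← Finset.mul_sum, ← Finset.mul_sum, ← Finset.mul_sum]
          rw [hS1def, hS2def]; ring
      _ ≤ C1 * (S1 + S2) + C2 := by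
          have hsum4 : (∑ t ∈ S, ‖fdiff N u.1 t‖ ^ l) + (∑ t ∈ S, ‖fdiff N u.2 t‖ ^ l) + S1 + S2
              ≤ ((2:ℝ) ^ l * 2 + 1) * (S1 + S2) := by linarith [hA1l, hA2l]
          have hQ : (0:ℝ) ≤ P * Dc := (mul_pos hP0 hDc0).le
          have hmul := mul_le_mul_of_nonneg_left hsum4 hQ
          rw [hC1def, hC2def, h2l]
          linarith [hmul]
  -- I positive
  have hIpos : 0 < Ifun N T ρ Φv u := by
    obtain ⟨t0, ht0, hne⟩ : ∃ t ∈ S, u.1 t ≠ 0 ∨ u.2 t ≠ 0 := by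
      by_contra h
      push_neg at h
      have hz : S1 + S2 = 0 := by
        have : ∀ t ∈ S, ‖u.1 t‖ ^ l + ‖u.2 t‖ ^ l = 0 := by
          intro t ht
          rw [(h t ht).1, (h t ht).2]
          simp [Real.zero_rpow (ne_of_gt hl0)]
        rw [hS1def, hS2def, ← Finset.sum_add_distrib]
        exact Finset.sum_eq_zero this
      linarith
    apply Finset.sum_pos'
    · intro t ht
      have nn : ∀ (i : Fin 4) (x : Rn N), 0 ≤ ρ i t * Φv i x :=
        fun i x => mul_nonneg (hρpos i t ht).le (hΦnonneg i x)
      have := nn 0 (fdiff N u.1 t); have := nn 1 (fdiff N u.2 t)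
      have := nn 2 (u.1 t); have := nn 3 (u.2 t)
      linarith
    · refine ⟨t0, ht0, ?_⟩
      have nn : ∀ (i : Fin 4) (x : Rn N), 0 ≤ ρ i t0 * Φv i x :=
        fun i x => mul_nonneg (hρpos i t0 ht0).le (hΦnonneg i x)
      have n0 := nn 0 (fdiff N u.1 t0); have n1 := nn 1 (fdiff N u.2 t0)
      have n2 := nn 2 (u.1 t0); have n3 := nn 3 (u.2 t0)
      rcases hne with h | h
      · have hp : 0 < ρ 2 t0 * Φv 2 (u.1 t0) :=
          mul_pos (hρpos 2 t0 ht0) (Phi_pos (hΦconv 2) (hΦzero 2) (hΦnonneg 2) h)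
        linarith
      · have hp : 0 < ρ 3 t0 * Φv 3 (u.2 t0) :=
          mul_pos (hρpos 3 t0 ht0) (Phi_pos (hΦconv 3) (hΦzero 3) (hΦnonneg 3) h)
        linarith
  -- F sum lower bound
  have hFsum : M' * (S1 + S2) - C ≤ ∑ t ∈ S, F t (u.1 t) (u.2 t) := by
    calc M' * (S1 + S2) - C
        = ∑ t ∈ S, (M' * (‖u.1 t‖ ^ l + ‖u.2 t‖ ^ l) - cf t) := by
          rw [Finset.sum_sub_distrib, ← Finset.mul_sum, Finset.sum_add_distrib,
            hS1def, hS2def, hCdef]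
      _ ≤ ∑ t ∈ S, F t (u.1 t) (u.2 t) :=
          Finset.sum_le_sum fun t ht => hcfF t ht _ _
  -- conclude
  have hfinal : M * Ifun N T ρ Φv u ≤ ∑ t ∈ S, F t (u.1 t) (u.2 t) := by
    have h1 : M * Ifun N T ρ Φv u ≤ M * (C1 * (S1 + S2) + C2) :=
      mul_le_mul_of_nonneg_left hI_le hM.le
    have h2 : C + M * C2 ≤ S1 + S2 := le_trans (le_trans (le_max_left _ _) (by linarith)) hSLge
    have h3 : M' * (S1 + S2) - C = M * C1 * (S1 + S2) + ((S1 + S2) - C) := by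
      rw [hM'def]; ring
    linarith [h1, h2, hFsum, h3]
  refine ⟨hIpos, ?_⟩
  rw [div_le_iff₀ hIpos, PsiFun]
  calc -∑ t ∈ S, F t (u.1 t) (u.2 t) ≤ -(M * Ifun N T ρ Φv u) := by linarith
    _ = -M * Ifun N T ρ Φv u := by ring
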